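/- Let m ≥ 2 be an integer. There exists a sequence (x_i)_{i≥0} of 2-adic integers with x_i ∈ 2ℤ_2 for every i ≥ 0, such that for every n ≥ 1 one has ∑_{i=0}^{n} 2^i · x_i^{2^{n−i}} = 2^{m·2^{n−1}} · (1 − 2^{2^n − 1}) in ℤ_2. -/

import Mathlib

open Finset

/-- The target ghost component. -/
noncomputable def ttAux (m n : ℕ) : ℚ_[2] :=
  2 ^ (m * 2 ^ (n - 1)) * (1 - 2 ^ (2 ^ n - 1))

/-- The recursively defined sequence in `ℚ_[2]`. -/
noncomputable def yyAux (m : ℕ) : ℕ → ℚ_[2]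
  | 0 => 0
  | n + 1 =>
    (ttAux m (n + 1) - ∑ i ∈ (Finset.range (n + 1)).attach,
        2 ^ (i : ℕ) * yyAux m i ^ 2 ^ (n + 1 - (i : ℕ))) / 2 ^ (n + 1)
  termination_by n => n
  decreasing_by exact Finset.mem_range.mp i.2

lemma two_norm : ‖(2 : ℚ_[2])‖ = 2⁻¹ := by
  have := Padic.norm_p (p := 2)
  push_cast at this
  exact this

lemma yyAux_norm (m : ℕ) (hm : 2 ≤ m) : ∀ n : ℕ, ‖yyAux m n‖ ≤ 2⁻¹ := by
  intro n
  induction n using Nat.strong_induction_on with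
  | _ n ih =>
    match n with
    | 0 => simp [yyAux]
    | k + 1 =>
      rw [yyAux]
      have h2 : ‖(2 : ℚ_[2]) ^ (k + 1)‖ = (2⁻¹ : ℝ) ^ (k + 1) := by
        rw [norm_pow, two_norm]
      have hkey : ‖ttAux m (k + 1) - ∑ i ∈ (Finset.range (k + 1)).attach,
          2 ^ (i : ℕ) * yyAux m i ^ 2 ^ (k + 1 - (i : ℕ))‖ ≤ (2⁻¹ : ℝ) ^ (k + 2) := by
        have hpos : (0 : ℝ) ≤ (2⁻¹ : ℝ) ^ (k + 2) := by positivity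
        have hS : ‖∑ i ∈ (Finset.range (k + 1)).attach,
            2 ^ (i : ℕ) * yyAux m i ^ 2 ^ (k + 1 - (i : ℕ))‖ ≤ (2⁻¹ : ℝ) ^ (k + 2) := by
          apply IsUltrametricDist.norm_sum_le_of_forall_le_of_nonneg hpos
          intro i _
          have hi : (i : ℕ) < k + 1 := Finset.mem_range.mp i.2
          have hyi : ‖yyAux m i‖ ≤ 2⁻¹ := ih _ hi
          have h1 : ‖(2 : ℚ_[2]) ^ (i : ℕ) * yyAux m i ^ 2 ^ (k + 1 - (i : ℕ))‖
              ≤ (2⁻¹ : ℝ) ^ ((i : ℕ) + 2 ^ (k + 1 - (i : ℕ))) := by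
            rw [norm_mul, norm_pow, norm_pow, two_norm, pow_add]
            have : ‖yyAux m i‖ ^ 2 ^ (k + 1 - (i : ℕ)) ≤ (2⁻¹ : ℝ) ^ 2 ^ (k + 1 - (i : ℕ)) :=
              pow_le_pow_left₀ (norm_nonneg _) hyi _
            exact mul_le_mul_of_nonneg_left this (by positivity)
          refine h1.trans (pow_le_pow_of_le_one (by norm_num) (by norm_num) ?_)
          have := Nat.lt_two_pow_self (n := k + 1 - (i : ℕ))
          omega
        have hT : ‖ttAux m (k + 1)‖ ≤ (2⁻¹ : ℝ) ^ (k + 2) := by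
          rw [ttAux, norm_mul]
          have h1 : ‖(2 : ℚ_[2]) ^ (m * 2 ^ (k + 1 - 1))‖ ≤ (2⁻¹ : ℝ) ^ (k + 2) := by
            rw [norm_pow, two_norm]
            refine pow_le_pow_of_le_one (by norm_num) (by norm_num) ?_
            have h2k : 2 ^ (k + 1) ≤ m * 2 ^ k := by
              calc 2 ^ (k + 1) = 2 * 2 ^ k := by ring
                _ ≤ m * 2 ^ k := Nat.mul_le_mul_right _ hm
            have := Nat.lt_two_pow_self (n := k + 1)
            simpa using le_trans (by omega) h2k
          have h2 : ‖(1 : ℚ_[2]) - 2 ^ (2 ^ (k + 1) - 1)‖ ≤ 1 := by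
            have : ((1 - 2 ^ (2 ^ (k + 1) - 1) : ℤ) : ℚ_[2]) = 1 - 2 ^ (2 ^ (k + 1) - 1) := by
              push_cast; ring
            rw [← this]
            exact Padic.norm_int_le_one _
          calc ‖(2 : ℚ_[2]) ^ (m * 2 ^ (k + 1 - 1))‖ * ‖(1 : ℚ_[2]) - 2 ^ (2 ^ (k + 1) - 1)‖
              ≤ (2⁻¹ : ℝ) ^ (k + 2) * 1 := mul_le_mul h1 h2 (norm_nonneg _) hpos
            _ = (2⁻¹ : ℝ) ^ (k + 2) := mul_one _
        calc ‖ttAux m (k + 1) - ∑ i ∈ (Finset.range (k + 1)).attach,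
              2 ^ (i : ℕ) * yyAux m i ^ 2 ^ (k + 1 - (i : ℕ))‖
            ≤ max ‖ttAux m (k + 1)‖ ‖∑ i ∈ (Finset.range (k + 1)).attach,
              2 ^ (i : ℕ) * yyAux m i ^ 2 ^ (k + 1 - (i : ℕ))‖ := by
              rw [sub_eq_add_neg]
              have h := IsUltrametricDist.norm_add_le_max (ttAux m (k + 1))
                (-∑ i ∈ (Finset.range (k + 1)).attach,
                  2 ^ (i : ℕ) * yyAux m i ^ 2 ^ (k + 1 - (i : ℕ)))
              rwa [norm_neg] at h
          _ ≤ (2⁻¹ : ℝ) ^ (k + 2) := max_le hT hS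
      rw [norm_div, h2]
      rw [div_le_iff₀ (by positivity)]
      calc ‖ttAux m (k + 1) - ∑ i ∈ (Finset.range (k + 1)).attach,
            2 ^ (i : ℕ) * yyAux m i ^ 2 ^ (k + 1 - (i : ℕ))‖
          ≤ (2⁻¹ : ℝ) ^ (k + 2) := hkey
        _ = 2⁻¹ * (2⁻¹ : ℝ) ^ (k + 1) := by ring

/-- The ghost equation holds for the recursively defined sequence. -/
lemma yyAux_sum (m : ℕ) (n : ℕ) (hn : 1 ≤ n) :
    ∑ i ∈ Finset.range (n + 1), (2 : ℚ_[2]) ^ i * yyAux m i ^ 2 ^ (n - i) = ttAux m n := by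
  obtain ⟨k, rfl⟩ : ∃ k, n = k + 1 := ⟨n - 1, by omega⟩
  rw [Finset.sum_range_succ]
  have hS : ∑ i ∈ Finset.range (k + 1), (2 : ℚ_[2]) ^ i * yyAux m i ^ 2 ^ (k + 1 - i)
      = ∑ i ∈ (Finset.range (k + 1)).attach, 2 ^ (i : ℕ) * yyAux m i ^ 2 ^ (k + 1 - (i : ℕ)) :=
    (Finset.sum_attach _ _).symm
  rw [hS]
  have hlast : (2 : ℚ_[2]) ^ (k + 1) * yyAux m (k + 1) ^ 2 ^ (k + 1 - (k + 1))
      = 2 ^ (k + 1) * yyAux m (k + 1) := by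
    simp
  rw [hlast, yyAux]
  field_simp
  ring

lemma padicInt_coe_sum {α : Type*} (s : Finset α) (f : α → ℤ_[2]) :
    ((∑ i ∈ s, f i : ℤ_[2]) : ℚ_[2]) = ∑ i ∈ s, (f i : ℚ_[2]) :=
  map_sum PadicInt.Coe.ringHom f s

/-- The sequence as 2-adic integers. -/
noncomputable def xxAux (m : ℕ) (hm : 2 ≤ m) (n : ℕ) : ℤ_[2] :=
  ⟨yyAux m n, (yyAux_norm m hm n).trans (by norm_num)⟩

lemma xxAux_coe (m : ℕ) (hm : 2 ≤ m) (n : ℕ) : ((xxAux m hm n : ℤ_[2]) : ℚ_[2]) = yyAux m n :=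
  rfl

theorem stmt14 (m : ℕ) (hm : 2 ≤ m) :
    ∃ x : ℕ → ℤ_[2],
      (∀ i : ℕ, (2 : ℤ_[2]) ∣ x i) ∧
      ∀ n : ℕ, 1 ≤ n →
        ∑ i ∈ Finset.range (n + 1), (2 : ℤ_[2]) ^ i * (x i) ^ (2 ^ (n - i)) =
          (2 : ℤ_[2]) ^ (m * 2 ^ (n - 1)) * (1 - (2 : ℤ_[2]) ^ (2 ^ n - 1)) := by
  have hbd : ∀ n, ‖yyAux m n‖ ≤ 2⁻¹ := yyAux_norm m hm
  refine ⟨xxAux m hm, ?_, ?_⟩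
  · intro i
    rw [show (2 : ℤ_[2]) = ((2 : ℕ) : ℤ_[2]) by norm_cast, ← PadicInt.norm_lt_one_iff_dvd]
    have hv : ‖xxAux m hm i‖ = ‖yyAux m i‖ := rfl
    rw [hv]
    exact lt_of_le_of_lt (hbd i) (by norm_num)
  · intro n hn
    have h := yyAux_sum m n hn
    apply Subtype.ext
    show ((∑ i ∈ Finset.range (n + 1), (2 : ℤ_[2]) ^ i * xxAux m hm i ^ 2 ^ (n - i) :
        ℤ_[2]) : ℚ_[2]) =
      (((2 : ℤ_[2]) ^ (m * 2 ^ (n - 1)) * (1 - (2 : ℤ_[2]) ^ (2 ^ n - 1)) : ℤ_[2]) : ℚ_[2])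
    rw [padicInt_coe_sum]
    simp only [PadicInt.coe_mul, PadicInt.coe_pow, PadicInt.coe_sub, PadicInt.coe_one,
      xxAux_coe]
    have h2 : ((2 : ℤ_[2]) : ℚ_[2]) = 2 := by norm_cast
    simp only [h2]
    rw [h, ttAux]
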